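/- Let k > 1 and n ≥ 1 be integers. Let m = ∏_{p | k} p^{v_p(n)}, where the product is over primes p dividing k and v_p(n) is the p-adic valuation of n, and let N = n/m. Then Φ_k(x^n) = Φ_{km}(x^N) = ∏_{d | N} Φ_{kmd}(x). -/

import Mathlib

open Polynomial

private lemma expand_cyclo_of_primes_dvd :
    ∀ m, 0 < m → ∀ k, 0 < k → (∀ p : ℕ, p.Prime → p ∣ m → p ∣ k) →
      expand ℤ m (cyclotomic k ℤ) = cyclotomic (k * m) ℤ := by
  intro m
  induction m using Nat.strong_induction_on with
  | _ m ih =>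
    intro hm k hk hprimes
    rcases eq_or_lt_of_le (Nat.succ_le_of_lt hm) with h1 | h1
    · rw [← h1]; simp
    · have hm1 : m ≠ 1 := by omega
      set p := m.minFac with hp
      have hpp : p.Prime := Nat.minFac_prime hm1
      have hpm : p ∣ m := Nat.minFac_dvd m
      have hpk : p ∣ k := hprimes p hpp hpm
      have hmp : m = m / p * p := (Nat.div_mul_cancel hpm).symm
      have hlt : m / p < m := Nat.div_lt_self (by omega) hpp.one_lt
      have hpos : 0 < m / p := Nat.div_pos (Nat.le_of_dvd (by omega) hpm) hpp.pos
      calc expand ℤ m (cyclotomic k ℤ)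
          = expand ℤ (m / p) (expand ℤ p (cyclotomic k ℤ)) := by
            rw [expand_expand, ← hmp]
        _ = expand ℤ (m / p) (cyclotomic (k * p) ℤ) := by
            rw [cyclotomic_expand_eq_cyclotomic hpp hpk]
        _ = cyclotomic (k * p * (m / p)) ℤ := by
            refine ih (m / p) hlt hpos (k * p) (Nat.mul_pos hk hpp.pos) ?_
            intro q hq hqd
            exact (hprimes q hq (hqd.trans (Nat.div_dvd_of_dvd hpm))).mul_right p
        _ = cyclotomic (k * m) ℤ := by
            rw [mul_assoc, Nat.mul_div_cancel' hpm]

private lemma expand_pow_cyclo {p : ℕ} (hp : p.Prime) {k : ℕ} (hk : 0 < k) (hpk : ¬ p ∣ k) :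
    ∀ a : ℕ, expand ℤ (p ^ a) (cyclotomic k ℤ)
      = ∏ j ∈ Finset.range (a + 1), cyclotomic (k * p ^ j) ℤ := by
  intro a
  induction a with
  | zero => simp
  | succ a iha =>
    have h1 : expand ℤ (p ^ (a + 1)) (cyclotomic k ℤ)
        = expand ℤ (p ^ a) (expand ℤ p (cyclotomic k ℤ)) := by
      rw [expand_expand, ← pow_succ]
    rw [h1, cyclotomic_expand_eq_cyclotomic_mul hp hpk, map_mul,
      expand_cyclo_of_primes_dvd (p ^ a) (pow_pos hp.pos a) (k * p) (Nat.mul_pos hk hp.pos)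
        (fun q hq hqd => ((Nat.Prime.dvd_of_dvd_pow (by exact hq) hqd)).mul_left k),
      iha]
    have e : k * p * p ^ a = k * p ^ (a + 1) := by ring
    rw [e, Finset.prod_range_succ, mul_comm]
    rw [Finset.prod_range_succ, Finset.prod_range_succ]

private lemma prod_divisors_mul_coprime {M : Type*} [CommMonoid M] (f : ℕ → M) {a b : ℕ}
    (ha : a ≠ 0) (hb : b ≠ 0) (hab : a.Coprime b) :
    ∏ d ∈ (a * b).divisors, f d = ∏ e ∈ a.divisors, ∏ d ∈ b.divisors, f (e * d) := by
  rw [← Finset.prod_product']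
  refine Finset.prod_nbij' (fun d => (d.gcd a, d.gcd b)) (fun x => x.1 * x.2) ?_ ?_ ?_ ?_ ?_
  · intro d hd
    simp only [Nat.mem_divisors] at hd
    simp only [Finset.mem_product, Nat.mem_divisors]
    exact ⟨⟨Nat.gcd_dvd_right _ _, ha⟩, ⟨Nat.gcd_dvd_right _ _, hb⟩⟩
  · intro x hx
    simp only [Finset.mem_product, Nat.mem_divisors] at hx
    exact Nat.mem_divisors.2 ⟨Nat.mul_dvd_mul hx.1.1 hx.2.1, mul_ne_zero ha hb⟩
  · intro d hd
    simp only [Nat.mem_divisors] at hd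
    exact (Nat.gcd_mul_gcd_eq_iff_dvd_mul_of_coprime hab).2 hd.1
  · intro x hx
    simp only [Finset.mem_product, Nat.mem_divisors] at hx
    have h1 : Nat.gcd (x.1 * x.2) a = x.1 := by
      rw [mul_comm, Nat.Coprime.gcd_mul_left_cancel x.1 ((hab.symm.coprime_dvd_left hx.2.1))]
      exact Nat.gcd_eq_left hx.1.1
    have h2 : Nat.gcd (x.1 * x.2) b = x.2 := by
      rw [Nat.Coprime.gcd_mul_left_cancel x.2 ((hab.coprime_dvd_left hx.1.1))]
      exact Nat.gcd_eq_left hx.2.1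
    simp [h1, h2]
  · intro d hd
    simp only [Nat.mem_divisors] at hd
    rw [(Nat.gcd_mul_gcd_eq_iff_dvd_mul_of_coprime hab).2 hd.1]

private lemma expand_cyclo_coprime :
    ∀ N : ℕ, 0 < N → ∀ k, 0 < k → N.Coprime k →
      expand ℤ N (cyclotomic k ℤ) = ∏ d ∈ N.divisors, cyclotomic (k * d) ℤ := by
  intro N
  induction N using Nat.recOnPosPrimePosCoprime with
  | prime_pow p a hp ha =>
    intro _ k hk hco
    have hpp : p.Prime := hp
    have hpk : ¬ p ∣ k :=
      (Nat.Prime.coprime_iff_not_dvd hpp).mp (hco.coprime_dvd_left (dvd_pow_self p ha.ne'))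
    rw [expand_pow_cyclo hpp hk hpk, Nat.prod_divisors_prime_pow hpp]
  | zero => intro h; omega
  | one =>
    intro _ k hk _
    simp
  | coprime a b ha hb hab iha ihb =>
    intro _ k hk hco
    have hbk : b.Coprime k := Nat.Coprime.coprime_dvd_left (dvd_mul_left b a) hco
    have hak : a.Coprime k := Nat.Coprime.coprime_dvd_left (dvd_mul_right a b) hco
    rw [← expand_expand, ihb (by omega) k hk hbk, map_prod]
    have : ∀ d ∈ b.divisors, expand ℤ a (cyclotomic (k * d) ℤ)
        = ∏ e ∈ a.divisors, cyclotomic (k * d * e) ℤ := by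
      intro d hd
      exact iha (by omega) (k * d) (Nat.mul_pos hk (Nat.pos_of_mem_divisors hd))
        (hak.mul_right (hab.coprime_dvd_right (Nat.dvd_of_mem_divisors hd)))
    rw [Finset.prod_congr rfl this, mul_comm a b,
      prod_divisors_mul_coprime (fun d => cyclotomic (k * d) ℤ) (by omega) (by omega) hab.symm]
    refine Finset.prod_congr rfl fun d _ => Finset.prod_congr rfl fun e _ => ?_
    rw [mul_assoc]

theorem cyclotomic_comp_X_pow_factorization
    (k n m N : ℕ) (hk : 1 < k) (hn : 1 ≤ n)
    (hm : m = ∏ p ∈ k.primeFactors, p ^ (n.factorization p))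
    (hN : N = n / m) :
    (cyclotomic k ℤ).comp (X ^ n) = (cyclotomic (k * m) ℤ).comp (X ^ N) ∧
      (cyclotomic k ℤ).comp (X ^ n) = ∏ d ∈ N.divisors, cyclotomic (k * m * d) ℤ := by
  have hn0 : n ≠ 0 := by omega
  have hmpos : 0 < m := by
    rw [hm]
    exact Finset.prod_pos fun p hp => pow_pos (Nat.prime_of_mem_primeFactors hp).pos _
  -- factorization of m
  have hfact : ∀ q : ℕ, m.factorization q
      = if q ∈ k.primeFactors then n.factorization q else 0 := by
    intro q
    rw [hm, Nat.factorization_prod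
      (fun p hp => pow_ne_zero _ (Nat.prime_of_mem_primeFactors hp).ne_zero)]
    rw [Finset.sum_apply']
    have : ∀ p ∈ k.primeFactors, (p ^ n.factorization p).factorization q
        = if p = q then n.factorization p else 0 := by
      intro p hp
      rw [Nat.Prime.factorization_pow (Nat.prime_of_mem_primeFactors hp)]
      simp [Finsupp.single_apply]
    rw [Finset.sum_congr rfl this, Finset.sum_ite_eq' k.primeFactors q (fun p => n.factorization p)]
  have hmdvd : m ∣ n := by
    rw [← Nat.factorization_le_iff_dvd (by omega) hn0]
    intro q
    rw [hfact q]
    split <;> simp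
  have hNpos : 0 < N := by
    rw [hN]
    exact Nat.div_pos (Nat.le_of_dvd (by omega) hmdvd) hmpos
  have hnmN : n = N * m := by rw [hN, Nat.div_mul_cancel hmdvd]
  -- primes of m divide k
  have hmk : ∀ p : ℕ, p.Prime → p ∣ m → p ∣ k := by
    intro p hp hpm
    have : 0 < m.factorization p := (Nat.Prime.dvd_iff_one_le_factorization hp (by omega)).1 hpm
    rw [hfact p] at this
    by_contra h
    have hnot : p ∉ k.primeFactors := fun hmem => h (Nat.dvd_of_mem_primeFactors hmem)
    rw [if_neg hnot] at this
    omega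
  -- N coprime to k
  have hNfac : ∀ q : ℕ, q ∈ k.primeFactors → N.factorization q = 0 := by
    intro q hq
    rw [hN, Nat.factorization_div hmdvd]
    simp only [Finsupp.tsub_apply]
    rw [hfact q, if_pos hq]
    omega
  have hNk : N.Coprime k := by
    rw [← Nat.disjoint_primeFactors (by omega) (by omega)]
    rw [Finset.disjoint_left]
    intro q hqN hqk
    have := hNfac q hqk
    have hq : q.Prime := Nat.prime_of_mem_primeFactors hqN
    have := (Nat.Prime.dvd_iff_one_le_factorization hq (by omega)).1 (Nat.dvd_of_mem_primeFactors hqN)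
    omega
  have hNm : N.Coprime m := by
    rw [← Nat.disjoint_primeFactors (by omega) (by omega)]
    rw [Finset.disjoint_left]
    intro q hqN hqm
    have hq : q.Prime := Nat.prime_of_mem_primeFactors hqN
    have hqk : q ∣ k := hmk q hq (Nat.dvd_of_mem_primeFactors hqm)
    have := hNfac q (Nat.mem_primeFactors.2 ⟨hq, hqk, by omega⟩)
    have := (Nat.Prime.dvd_iff_one_le_factorization hq (by omega)).1 (Nat.dvd_of_mem_primeFactors hqN)
    omega
  have key1 : (cyclotomic k ℤ).comp (X ^ n) = (cyclotomic (k * m) ℤ).comp (X ^ N) := by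
    rw [← expand_eq_comp_X_pow, ← expand_eq_comp_X_pow, hnmN, ← expand_expand,
      expand_cyclo_of_primes_dvd m hmpos k (by omega) hmk]
  refine ⟨key1, ?_⟩
  rw [key1, ← expand_eq_comp_X_pow,
    expand_cyclo_coprime N hNpos (k * m) (by positivity) (hNk.mul_right hNm)]
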